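/- There is a surjective group homomorphism from the presented group H = ⟨a, b | a²b⁻³ = 1, ab⁻²ab⁻¹ab⁻¹a⁻¹b²a⁻¹b²a⁻¹ba⁻¹ = 1⟩ onto the presented group T = ⟨a, b | a² = 1, b³ = 1, (ab)⁵ = 1⟩ sending the generator a to a and the generator b to b. -/

import Mathlib

/-- The relators of the presented group
`H = ⟨a, b | a²b⁻³, ab⁻²ab⁻¹ab⁻¹a⁻¹b²a⁻¹b²a⁻¹ba⁻¹⟩`. -/
def relsH : Set (FreeGroup (Fin 2)) :=
  letI a := FreeGroup.of (0 : Fin 2)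
  letI b := FreeGroup.of (1 : Fin 2)
  {a * a * b⁻¹ * b⁻¹ * b⁻¹,
   a * b⁻¹ * b⁻¹ * a * b⁻¹ * a * b⁻¹ * a⁻¹ * b * b * a⁻¹ * b * b * a⁻¹ * b * a⁻¹}

/-- The relators of the presented group `T = ⟨a, b | a², b³, (ab)⁵⟩`,
the (2,3,5) triangle group. -/
def relsT : Set (FreeGroup (Fin 2)) :=
  letI a := FreeGroup.of (0 : Fin 2)
  letI b := FreeGroup.of (1 : Fin 2)
  {a ^ 2, b ^ 3, (a * b) ^ 5}

/-- Adding the relations `a² = b³ = 1` to `H` gives `T`: there is a surjective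
homomorphism `H →* T` sending the generator `a` to `a` and `b` to `b`. -/
theorem exists_surjective_presentedGroupH_to_presentedGroupT :
    ∃ f : PresentedGroup relsH →* PresentedGroup relsT,
      Function.Surjective f ∧
      f (PresentedGroup.of 0) = PresentedGroup.of 0 ∧
      f (PresentedGroup.of 1) = PresentedGroup.of 1 := by
  set x : PresentedGroup relsT := PresentedGroup.of 0 with hxdef
  set y : PresentedGroup relsT := PresentedGroup.of 1 with hydef
  have hmem : ∀ r ∈ relsT, (PresentedGroup.mk relsT r) = 1 := fun r hr =>
    (QuotientGroup.eq_one_iff r).mpr (Subgroup.subset_normalClosure hr)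
  have h1 : x ^ 2 = 1 := by
    have := hmem _ (show _ ∈ relsT from Or.inl rfl); simp at this; exact this
  have h2 : y ^ 3 = 1 := by
    have := hmem _ (show _ ∈ relsT from Or.inr (Or.inl rfl)); simp at this; exact this
  have h3 : (x * y) ^ 5 = 1 := by
    have := hmem _ (show _ ∈ relsT from Or.inr (Or.inr rfl)); simp at this; exact this
  rw [pow_two] at h1
  rw [pow_succ, pow_two] at h2
  rw [pow_succ, pow_succ, pow_succ, pow_succ, pow_one] at h3
  have key : ∀ r ∈ relsH, FreeGroup.lift (fun i : Fin 2 => if i = 0 then x else y) r = 1 := by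
    intro r hr
    rcases hr with hr | hr <;> subst hr <;>
      simp only [map_mul, map_inv, FreeGroup.lift_apply_of, if_pos, if_neg, Fin.ext_iff] <;> norm_num
    · calc x * x * y⁻¹ * y⁻¹ * y⁻¹
          = (x * x) * (y * y * y)⁻¹ := by group
        _ = 1 := by rw [h1, h2]; group
    · calc x * y⁻¹ * y⁻¹ * x * y⁻¹ * x * y⁻¹ * x⁻¹ * y * y * x⁻¹ * y * y * x⁻¹ * y * x⁻¹
          = x * y * (y*y*y)⁻¹ * x * y⁻¹ * x * y⁻¹ * x⁻¹ * y * y * x⁻¹ * y * y * x⁻¹ * y * x⁻¹ := by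
            group
        _ = x * y * x * y⁻¹ * x * y⁻¹ * x⁻¹ * y * y * x⁻¹ * y * y * x⁻¹ * y * x⁻¹ := by
            rw [h2]; group
        _ = x * y * x * y⁻¹ * x * y⁻¹ * x⁻¹ * (y*y*y) * y⁻¹ * x⁻¹ * (y*y*y) * y⁻¹ * x⁻¹ * y * x⁻¹ := by
            group
        _ = x * y * x * y⁻¹ * x * y⁻¹ * x⁻¹ * y⁻¹ * x⁻¹ * y⁻¹ * x⁻¹ * y * x⁻¹ := by
            rw [h2]; group
        _ = x * y * x * y⁻¹ * x * (x*y) * (x*y) * (x * y * (x*y) * (x*y) * (x*y) * (x*y))⁻¹ * y * x⁻¹ := by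
            group
        _ = x * y * x * y⁻¹ * x * (x*y) * (x*y) * y * x⁻¹ := by
            rw [h3]; group
        _ = x * y * x * y⁻¹ * (x*x) * y * x * y * y * x⁻¹ := by
            group
        _ = x * y * x * x * y * y * x⁻¹ := by
            rw [h1]; group
        _ = x * y * (x*x) * (y*y*y) * y⁻¹ * x⁻¹ := by
            group
        _ = 1 := by rw [h1, h2]; group
  refine ⟨PresentedGroup.toGroup key, ?_, by simp, by simp⟩
  intro t
  have ht : t ∈ Subgroup.closure (Set.range (PresentedGroup.of : Fin 2 → PresentedGroup relsT)) := by
    rw [PresentedGroup.closure_range_of]; trivial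
  induction ht using Subgroup.closure_induction with
  | mem z hz =>
      obtain ⟨i, rfl⟩ := hz
      fin_cases i
      · exact ⟨PresentedGroup.of 0, by simp [hxdef]⟩
      · exact ⟨PresentedGroup.of 1, by simp [hydef]⟩
  | one => exact ⟨1, map_one _⟩
  | mul a b _ _ ha hb => obtain ⟨u, rfl⟩ := ha; obtain ⟨v, rfl⟩ := hb; exact ⟨u*v, map_mul _ _ _⟩
  | inv a _ ha => obtain ⟨u, rfl⟩ := ha; exact ⟨u⁻¹, map_inv _ _⟩
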